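/- arXiv:1406.5479 — 5 statements merged into one kernel-verified Lean document; each statement's English description precedes it below -/
import Mathlib

section
/- Let G be a group equipped with a linear order ≤ making it a linearly ordered group. Then the following are equivalent: (a) G is nontrivial and satisfies the common-power axiom; (b) there exist a nontrivial additive subgroup H of the rational numbers ℚ and a group isomorphism from G (written multiplicatively) onto H (written additively) which is simultaneously an order isomorphism, where H carries the order induced from ℚ. -/
namespace Stmt0Aux
variable {G : Type*} [Group G] [LinearOrder G]

lemma lmul (mono : ∀ a b c d : G, a ≤ b → c * a * d ≤ c * b * d)
    {a b : G} (c : G) (h : a ≤ b) : c * a ≤ c * b := by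
  simpa using mono a b c 1 h

lemma rmul (mono : ∀ a b c d : G, a ≤ b → c * a * d ≤ c * b * d)
    {a b : G} (d : G) (h : a ≤ b) : a * d ≤ b * d := by
  simpa using mono a b 1 d h

lemma one_le_mul' (mono : ∀ a b c d : G, a ≤ b → c * a * d ≤ c * b * d)
    {a b : G} (ha : 1 ≤ a) (hb : 1 ≤ b) : 1 ≤ a * b :=
  le_trans ha (by simpa using lmul mono a hb)

lemma pow_strictMono (mono : ∀ a b c d : G, a ≤ b → c * a * d ≤ c * b * d)
    {a : G} (ha : 1 < a) : StrictMono (fun n : ℕ => a ^ n) := by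
  apply strictMono_nat_of_lt_succ
  intro n
  have h1 : a ^ n * 1 ≤ a ^ n * a := lmul mono _ ha.le
  rw [mul_one] at h1
  rcases h1.lt_or_eq with h | h
  · simpa [pow_succ] using h
  · exact absurd (mul_left_cancel (a := a ^ n) (by simpa using h)).symm ha.ne

lemma pow_inj (mono : ∀ a b c d : G, a ≤ b → c * a * d ≤ c * b * d)
    {a : G} (ha : 1 < a) {n m : ℕ} (h : a ^ n = a ^ m) : n = m :=
  (pow_strictMono mono ha).injective h

lemma key (mono : ∀ a b c d : G, a ≤ b → c * a * d ≤ c * b * d)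
    (hnt : ∃ x : G, x ≠ 1)
    (cp : ∀ x y : G, 1 ≤ x → 1 ≤ y →
      ∃ z : G, 1 ≤ z ∧ ∃ n m : ℕ, x = z ^ n ∧ y = z ^ m) :
    ∃ F : G → ℚ, (∀ g h : G, F (g * h) = F g + F h) ∧
      (∀ x y : G, x ≤ y ↔ F x ≤ F y) ∧ (∃ a : G, F a ≠ 0) := by
  -- basic inversion lemmas
  have hinv1 : ∀ g : G, g ≤ 1 → 1 ≤ g⁻¹ := by
    intro g hg
    have := lmul mono g⁻¹ hg
    simpa using this
  have hinv2 : ∀ g : G, 1 ≤ g → g⁻¹ ≤ 1 := by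
    intro g hg
    have := lmul mono g⁻¹ hg
    simpa using this
  -- a positive element
  obtain ⟨x0, hx0⟩ := hnt
  have hea : ∃ a : G, 1 < a := by
    rcases lt_trichotomy x0 1 with h | h | h
    · refine ⟨x0⁻¹, lt_of_le_of_ne (hinv1 x0 h.le) ?_⟩
      intro hc
      exact hx0 (by simpa using hc.symm)
    · exact absurd h hx0
    · exact ⟨x0, h⟩
  obtain ⟨a, ha⟩ := hea
  -- the value function, well-defined
  have hv : ∀ g : G, 1 ≤ g → ∃ val : ℚ, ∀ u : G, 1 ≤ u → ∀ nn mm : ℕ,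
      a = u ^ nn → g = u ^ mm → val = (mm : ℚ) / nn := by
    intro g hg
    obtain ⟨z, hz, n, m, h1, h2⟩ := cp a g ha.le hg
    refine ⟨(m : ℚ) / n, ?_⟩
    intro u hu nn mm hann hgmm
    obtain ⟨w, hw, p, q, h3, h4⟩ := cp z u hz hu
    have haw1 : a = w ^ (p * n) := by rw [h1, h3, ← pow_mul, Nat.mul_comm]
    have haw2 : a = w ^ (q * nn) := by rw [hann, h4, ← pow_mul, Nat.mul_comm]
    have hgw1 : g = w ^ (p * m) := by rw [h2, h3, ← pow_mul, Nat.mul_comm]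
    have hgw2 : g = w ^ (q * mm) := by rw [hgmm, h4, ← pow_mul, Nat.mul_comm]
    have hw1 : 1 < w := by
      rcases hw.lt_or_eq with h | h
      · exact h
      · exact absurd (by rw [haw1, ← h]; simp) ha.ne'
    have e1 : p * n = q * nn := pow_inj mono hw1 (by rw [← haw1, ← haw2])
    have e2 : p * m = q * mm := pow_inj mono hw1 (by rw [← hgw1, ← hgw2])
    have hpn : p * n ≠ 0 := by
      intro hc
      exact ha.ne' (by rw [haw1, hc, pow_zero])
    have hp : 0 < p := Nat.pos_of_ne_zero (by intro hc; exact hpn (by simp [hc]))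
    have hn : n ≠ 0 := by intro hc; exact hpn (by simp [hc])
    have hq : 0 < q := by
      rcases Nat.eq_zero_or_pos q with h | h
      · exact absurd (e1.trans (by simp [h])) hpn
      · exact h
    have hnn : nn ≠ 0 := by
      intro hc
      rw [hc, Nat.mul_zero] at e1
      exact hpn e1
    have hmain : m * nn = mm * n := by
      have hcalc : m * nn * (p * q) = mm * n * (p * q) := by
        calc m * nn * (p * q) = (p * m) * (q * nn) := by ring
        _ = (q * mm) * (p * n) := by rw [e1, e2]
        _ = mm * n * (p * q) := by ring
      exact Nat.eq_of_mul_eq_mul_right (Nat.mul_pos hp hq) hcalc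
    rw [div_eq_div_iff (by exact_mod_cast hn) (by exact_mod_cast hnn)]
    exact_mod_cast hmain
  -- package the value function
  have hv2 : ∃ v : G → ℚ, ∀ g : G, 1 ≤ g → ∀ u : G, 1 ≤ u → ∀ nn mm : ℕ,
      a = u ^ nn → g = u ^ mm → v g = (mm : ℚ) / nn := by
    choose v hvs using hv
    exact ⟨fun g => if hg : 1 ≤ g then v g hg else 0,
      fun g hg => by simpa [dif_pos hg] using hvs g hg⟩
  obtain ⟨v, vspec⟩ := hv2
  -- basic properties of v
  have vnonneg : ∀ g : G, 1 ≤ g → 0 ≤ v g := by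
    intro g hg
    obtain ⟨z, hz, n, m, h1, h2⟩ := cp a g ha.le hg
    rw [vspec g hg z hz n m h1 h2]
    positivity
  have vpos : ∀ g : G, 1 < g → 0 < v g := by
    intro g hg
    obtain ⟨z, hz, n, m, h1, h2⟩ := cp a g ha.le hg.le
    rw [vspec g hg.le z hz n m h1 h2]
    have hn : n ≠ 0 := by
      intro hc; exact ha.ne' (by rw [h1, hc, pow_zero])
    have hm : m ≠ 0 := by
      intro hc; exact hg.ne' (by rw [h2, hc, pow_zero])
    have : (0:ℚ) < (m:ℚ) := by exact_mod_cast Nat.pos_of_ne_zero hm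
    have : (0:ℚ) < (n:ℚ) := by exact_mod_cast Nat.pos_of_ne_zero hn
    positivity
  have v1 : v 1 = 0 := by
    have := vspec 1 le_rfl a ha.le 1 0 (pow_one a).symm (pow_zero a).symm
    simpa using this
  have vadd : ∀ g h : G, 1 ≤ g → 1 ≤ h → v (g * h) = v g + v h := by
    intro g h hg hh
    obtain ⟨w, hw, p, q, h1, h2⟩ := cp g h hg hh
    obtain ⟨u, hu, nn, r, h3, h4⟩ := cp a w ha.le hw
    have hgu : g = u ^ (r * p) := by rw [h1, h4, ← pow_mul]
    have hhu : h = u ^ (r * q) := by rw [h2, h4, ← pow_mul]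
    have hghu : g * h = u ^ (r * p + r * q) := by
      rw [hgu, hhu, pow_add]
    have hgh : 1 ≤ g * h := one_le_mul' mono hg hh
    rw [vspec g hg u hu nn (r*p) h3 hgu, vspec h hh u hu nn (r*q) h3 hhu,
      vspec (g*h) hgh u hu nn (r*p + r*q) h3 hghu]
    push_cast
    ring
  -- the total function F
  set F : G → ℚ := fun g => if 1 ≤ g then v g else -v g⁻¹ with hF
  have Fof : ∀ g : G, 1 ≤ g → F g = v g := by
    intro g hg; simp [hF, if_pos hg]
  have Fofneg : ∀ g : G, ¬ (1 ≤ g) → F g = -v g⁻¹ := by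
    intro g hg; simp only [hF, if_neg hg]
  have F1 : F 1 = 0 := by rw [Fof 1 le_rfl, v1]
  -- additivity of F
  have Fadd : ∀ g h : G, F (g * h) = F g + F h := by
    intro g h
    by_cases hg : 1 ≤ g <;> by_cases hh : 1 ≤ h
    · have hgh : 1 ≤ g * h := one_le_mul' mono hg hh
      rw [Fof _ hgh, Fof _ hg, Fof _ hh, vadd g h hg hh]
    · -- g ≥ 1, h < 1
      have hh' : 1 ≤ h⁻¹ := hinv1 h (le_of_not_ge hh)
      by_cases hgh : 1 ≤ g * h
      · -- g = (g*h) * h⁻¹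
        have hdec : (g * h) * h⁻¹ = g := by group
        have := vadd (g * h) h⁻¹ hgh hh'
        rw [hdec] at this
        rw [Fof _ hgh, Fof _ hg, Fofneg _ hh, this]
        ring
      · -- h⁻¹ = (g*h)⁻¹ * g
        have hgh' : 1 ≤ (g * h)⁻¹ := hinv1 _ (le_of_not_ge hgh)
        have hdec : (g * h)⁻¹ * g = h⁻¹ := by group
        have := vadd (g * h)⁻¹ g hgh' hg
        rw [hdec] at this
        rw [Fofneg _ hgh, Fof _ hg, Fofneg _ hh, this]
        ring
    · -- g < 1, h ≥ 1
      have hg' : 1 ≤ g⁻¹ := hinv1 g (le_of_not_ge hg)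
      by_cases hgh : 1 ≤ g * h
      · -- h = g⁻¹ * (g*h)
        have hdec : g⁻¹ * (g * h) = h := by group
        have := vadd g⁻¹ (g * h) hg' hgh
        rw [hdec] at this
        rw [Fof _ hgh, Fofneg _ hg, Fof _ hh, this]
        ring
      · -- g⁻¹ = h * (g*h)⁻¹
        have hgh' : 1 ≤ (g * h)⁻¹ := hinv1 _ (le_of_not_ge hgh)
        have hdec : h * (g * h)⁻¹ = g⁻¹ := by group
        have := vadd h (g * h)⁻¹ hh hgh'
        rw [hdec] at this
        rw [Fofneg _ hgh, Fofneg _ hg, Fof _ hh, this]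
        ring
    · -- g < 1, h < 1
      have hg' : 1 ≤ g⁻¹ := hinv1 g (le_of_not_ge hg)
      have hh' : 1 ≤ h⁻¹ := hinv1 h (le_of_not_ge hh)
      have hgh : ¬ (1 ≤ g * h) := by
        intro hc
        have h1 : g * h ≤ g * 1 := lmul mono g (le_of_not_ge hh)
        rw [mul_one] at h1
        exact hg (le_trans hc h1)
      have hdec : h⁻¹ * g⁻¹ = (g * h)⁻¹ := by group
      have := vadd h⁻¹ g⁻¹ hh' hg'
      rw [hdec] at this
      rw [Fofneg _ hgh, Fofneg _ hg, Fofneg _ hh, this]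
      ring
  -- strict monotonicity
  have Fpos : ∀ x : G, 1 < x → 0 < F x := by
    intro x hx
    rw [Fof x hx.le]
    exact vpos x hx
  have Fmono : ∀ x y : G, x < y → F x < F y := by
    intro x y hxy
    have h1 : 1 ≤ y * x⁻¹ := by
      have := rmul mono x⁻¹ hxy.le
      simpa using this
    have h2 : y * x⁻¹ ≠ 1 := by
      intro hc
      exact hxy.ne' (mul_inv_eq_one.mp hc)
    have h3 : 1 < y * x⁻¹ := lt_of_le_of_ne h1 (Ne.symm h2)
    have h4 : (y * x⁻¹) * x = y := by group
    have := Fadd (y * x⁻¹) x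
    rw [h4] at this
    rw [this]
    have := Fpos _ h3
    linarith
  have Fiff : ∀ x y : G, x ≤ y ↔ F x ≤ F y := by
    intro x y
    constructor
    · intro h
      rcases h.lt_or_eq with h | h
      · exact (Fmono x y h).le
      · rw [h]
    · intro h
      by_contra hc
      push_neg at hc
      exact absurd h (not_le.mpr (Fmono y x hc))
  exact ⟨F, Fadd, Fiff, a, (Fpos a ha).ne'⟩

/-- Key arithmetic lemma in ℚ. -/
lemma rat_lemma (p q : ℚ) (hp : 0 ≤ p) (hq : 0 ≤ q) :
    ∃ r : ℚ, 0 ≤ r ∧ (∃ s t : ℤ, r = s * p + t * q) ∧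
      (∃ n : ℕ, p = n * r) ∧ (∃ m : ℕ, q = m * r) := by
  set A : ℤ := p.num * q.den with hA
  set B : ℤ := q.num * p.den with hB
  set D : ℚ := (p.den : ℚ) * (q.den : ℚ) with hD
  have hDpos : 0 < D := by positivity
  have hpA : p = (A : ℚ) / D := by
    rw [eq_div_iff hDpos.ne']
    push_cast [hA]
    rw [hD]
    rw [show p * ((p.den : ℚ) * q.den) = (p * p.den) * q.den by ring]
    rw [Rat.mul_den_eq_num]
  have hqB : q = (B : ℚ) / D := by
    rw [eq_div_iff hDpos.ne']
    push_cast [hB]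
    rw [hD]
    rw [show q * ((p.den : ℚ) * q.den) = (q * q.den) * p.den by ring]
    rw [Rat.mul_den_eq_num]
  by_cases hg : Int.gcd A B = 0
  · have h0 : A = 0 ∧ B = 0 := Int.gcd_eq_zero_iff.mp hg
    refine ⟨0, le_refl 0, ⟨0, 0, by ring⟩, ⟨0, ?_⟩, ⟨0, ?_⟩⟩
    · rw [hpA, h0.1]; simp
    · rw [hqB, h0.2]; simp
  · set g : ℕ := Int.gcd A B with hgdef
    refine ⟨(g : ℚ) / D, by positivity, ?_, ?_, ?_⟩
    · refine ⟨Int.gcdA A B, Int.gcdB A B, ?_⟩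
      rw [hpA, hqB]
      have hbez : (g : ℤ) = A * Int.gcdA A B + B * Int.gcdB A B := Int.gcd_eq_gcd_ab A B
      field_simp
      exact_mod_cast hbez.trans (by ring)
    · obtain ⟨k, hk⟩ : (g : ℤ) ∣ A := Int.gcd_dvd_left A B
      have hA0 : 0 ≤ A := mul_nonneg (Rat.num_nonneg.mpr hp) (by positivity)
      have hk0 : 0 ≤ k := by
        by_contra hneg
        push_neg at hneg
        have : A < 0 := by
          have hgpos : (0:ℤ) < g := by exact_mod_cast Nat.pos_of_ne_zero hg
          calc A = g * k := hk
          _ < 0 := mul_neg_of_pos_of_neg hgpos hneg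
        omega
      refine ⟨k.toNat, ?_⟩
      rw [hpA, hk]
      have h2 : ((k.toNat : ℚ)) = (k : ℚ) := by exact_mod_cast Int.toNat_of_nonneg hk0
      push_cast [h2]
      ring
    · obtain ⟨k, hk⟩ : (g : ℤ) ∣ B := Int.gcd_dvd_right A B
      have hB0 : 0 ≤ B := mul_nonneg (Rat.num_nonneg.mpr hq) (by positivity)
      have hk0 : 0 ≤ k := by
        by_contra hneg
        push_neg at hneg
        have : B < 0 := by
          have hgpos : (0:ℤ) < g := by exact_mod_cast Nat.pos_of_ne_zero hg
          calc B = g * k := hk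
          _ < 0 := mul_neg_of_pos_of_neg hgpos hneg
        omega
      refine ⟨k.toNat, ?_⟩
      rw [hqB, hk]
      have h2 : ((k.toNat : ℚ)) = (k : ℚ) := by exact_mod_cast Int.toNat_of_nonneg hk0
      push_cast [h2]
      ring

end Stmt0Aux


/-- A nontrivial linearly ordered group satisfying the common-power axiom
is, equivalently, order-isomorphic (via a group isomorphism) to a nontrivial additive
subgroup of `ℚ`. -/
theorem stmt0 {G : Type*} [Group G] [LinearOrder G]
    (mono : ∀ a b c d : G, a ≤ b → c * a * d ≤ c * b * d) :
    ((∃ x : G, x ≠ 1) ∧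
      (∀ x y : G, 1 ≤ x → 1 ≤ y →
        ∃ z : G, 1 ≤ z ∧ ∃ n m : ℕ, x = z ^ n ∧ y = z ^ m))
    ↔
    (∃ H : AddSubgroup ℚ, H ≠ ⊥ ∧ ∃ e : G ≃ H,
      (∀ x y : G, (e (x * y) : ℚ) = (e x : ℚ) + (e y : ℚ)) ∧
      (∀ x y : G, x ≤ y ↔ (e x : ℚ) ≤ (e y : ℚ))) := by
  constructor
  · rintro ⟨hnt, cp⟩
    obtain ⟨F, Fadd, Fiff, a, haF⟩ := Stmt0Aux.key mono hnt cp
    have F1 : F 1 = 0 := by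
      have := Fadd 1 1
      rw [mul_one] at this
      linarith
    have Finv : ∀ g : G, F g⁻¹ = -F g := by
      intro g
      have := Fadd g g⁻¹
      rw [mul_inv_cancel, F1] at this
      linarith
    have Finj : Function.Injective F := by
      intro x y hxy
      exact le_antisymm ((Fiff x y).mpr hxy.le) ((Fiff y x).mpr hxy.ge)
    refine ⟨{ carrier := Set.range F
              add_mem' := ?_
              zero_mem' := ⟨1, F1⟩
              neg_mem' := ?_ }, ?_, ?_⟩
    · rintro x y ⟨g, rfl⟩ ⟨h, rfl⟩
      exact ⟨g * h, Fadd g h⟩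
    · rintro x ⟨g, rfl⟩
      exact ⟨g⁻¹, Finv g⟩
    · intro hbot
      have hmem : F a ∈ (⊥ : AddSubgroup ℚ) := by
        rw [← hbot]; exact ⟨a, rfl⟩
      exact haF (AddSubgroup.mem_bot.mp hmem)
    · have hbij : Function.Bijective
          (fun g : G => (⟨F g, g, rfl⟩ : {x : ℚ // x ∈ Set.range F})) := by
        constructor
        · intro x y hxy
          exact Finj (congrArg Subtype.val hxy)
        · rintro ⟨x, g, rfl⟩
          exact ⟨g, rfl⟩
      refine ⟨Equiv.ofBijective _ hbij, ?_, ?_⟩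
      · intro x y
        simpa [Equiv.ofBijective] using Fadd x y
      · intro x y
        simpa [Equiv.ofBijective] using Fiff x y
  · rintro ⟨H, hH, e, he_add, he_ord⟩
    have e1 : (e 1 : ℚ) = 0 := by
      have := he_add 1 1
      rw [mul_one] at this
      linarith
    have epow : ∀ (z : G) (n : ℕ), (e (z ^ n) : ℚ) = n * (e z : ℚ) := by
      intro z n
      induction n with
      | zero => simpa using e1
      | succ k ih =>
        rw [pow_succ, he_add, ih]
        push_cast
        ring
    have eord0 : ∀ x : G, 1 ≤ x ↔ 0 ≤ (e x : ℚ) := by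
      intro x
      rw [he_ord 1 x, e1]
    constructor
    · -- nontrivial
      have : ∃ q ∈ H, q ≠ (0 : ℚ) := by
        by_contra hc
        push_neg at hc
        exact hH (by
          ext x
          simp only [AddSubgroup.mem_bot]
          exact ⟨fun hx => hc x hx, fun hx => by rw [hx]; exact H.zero_mem⟩)
      obtain ⟨q, hqH, hq0⟩ := this
      refine ⟨e.symm ⟨q, hqH⟩, ?_⟩
      intro hc
      have : (e (e.symm ⟨q, hqH⟩) : ℚ) = (e 1 : ℚ) := by rw [hc]
      rw [e.apply_symm_apply, e1] at this
      exact hq0 this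
    · -- common power
      intro x y hx hy
      have hpx : (0:ℚ) ≤ (e x : ℚ) := (eord0 x).mp hx
      have hpy : (0:ℚ) ≤ (e y : ℚ) := (eord0 y).mp hy
      obtain ⟨r, hr0, ⟨s, t, hrst⟩, ⟨n, hn⟩, ⟨m, hm⟩⟩ :=
        Stmt0Aux.rat_lemma (e x : ℚ) (e y : ℚ) hpx hpy
      have hrH : r ∈ H := by
        rw [hrst]
        refine H.add_mem ?_ ?_
        · simpa [zsmul_eq_mul] using H.zsmul_mem (e x).2 s
        · simpa [zsmul_eq_mul] using H.zsmul_mem (e y).2 t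
      refine ⟨e.symm ⟨r, hrH⟩, ?_, n, m, ?_, ?_⟩
      · rw [eord0, e.apply_symm_apply]
        exact hr0
      · apply e.injective
        apply Subtype.ext
        rw [epow, e.apply_symm_apply]
        exact hn
      · apply e.injective
        apply Subtype.ext
        rw [epow, e.apply_symm_apply]
        exact hm
end

section
/- Let G be a linearly ordered group which is nontrivial and satisfies the common-power axiom. Then there exists an injective, strictly monotone group homomorphism from G (written multiplicatively) into the additive group ℚ of rational numbers (i.e. a map φ : G → ℚ with φ(x·y) = φ(x) + φ(y), φ injective, and x ≤ y implying φ(x) ≤ φ(y)). -/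
/-- A nontrivial linearly ordered group satisfying the common-power axiom
admits an injective, monotone group homomorphism into `(ℚ, +)`. -/
theorem stmt1 {G : Type*} [Group G] [LinearOrder G]
    (mono : ∀ a b c d : G, a ≤ b → c * a * d ≤ c * b * d)
    (hnt : ∃ x : G, x ≠ 1)
    (hcp : ∀ x y : G, 1 ≤ x → 1 ≤ y →
      ∃ z : G, 1 ≤ z ∧ ∃ n m : ℕ, x = z ^ n ∧ y = z ^ m) :
    ∃ φ : G → ℚ, (∀ x y : G, φ (x * y) = φ x + φ y) ∧
      Function.Injective φ ∧ (∀ x y : G, x ≤ y → φ x ≤ φ y) := by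
  haveI i1 : CovariantClass G G (· * ·) (· ≤ ·) :=
    ⟨fun c a b h => by simpa using mono a b c 1 h⟩
  haveI i2 : CovariantClass G G (Function.swap (· * ·)) (· ≤ ·) :=
    ⟨fun c a b h => by simpa using mono a b 1 c h⟩
  -- a positive element
  obtain ⟨x0, hx0⟩ := hnt
  obtain ⟨a, ha⟩ : ∃ a : G, 1 < a := by
    rcases lt_trichotomy x0 1 with h | h | h
    · exact ⟨x0⁻¹, one_lt_inv'.mpr h⟩
    · exact absurd h hx0
    · exact ⟨x0, h⟩
  -- exponent injectivity
  have hpowinj : ∀ u : G, 1 < u → ∀ i j : ℕ, u ^ i = u ^ j → i = j := by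
    intro u hu i j h
    rcases lt_trichotomy i j with hlt | he | hgt
    · exact absurd h (ne_of_lt (pow_lt_pow_right' hu hlt))
    · exact he
    · exact absurd h.symm (ne_of_lt (pow_lt_pow_right' hu hgt))
  classical
  have key : ∀ x : G, 1 ≤ x → ∃ z : G, 1 ≤ z ∧ ∃ n m : ℕ, x = z ^ n ∧ a = z ^ m :=
    fun x hx => hcp x a hx ha.le
  choose Z hZ N M hxZ haZ using key
  set φ0 : G → ℚ := fun x => if h : 1 ≤ x then ((N x h : ℚ) / (M x h)) else 0 with hφ0
  -- well-definedness of φ0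
  have rep : ∀ (x : G) (hx : 1 ≤ x) (u : G) (p q : ℕ),
      1 ≤ u → x = u ^ p → a = u ^ q → φ0 x = (p : ℚ) / q := by
    intro x hx u p q hu hxu hau
    obtain ⟨w, hw, i, j, hzw, huw⟩ := hcp (Z x hx) u (hZ x hx) hu
    have e1 : x = w ^ (i * N x hx) := by
      calc x = Z x hx ^ N x hx := hxZ x hx
        _ = (w ^ i) ^ N x hx := by rw [hzw]
        _ = w ^ (i * N x hx) := by rw [pow_mul]
    have e2 : a = w ^ (i * M x hx) := by
      calc a = Z x hx ^ M x hx := haZ x hx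
        _ = (w ^ i) ^ M x hx := by rw [hzw]
        _ = w ^ (i * M x hx) := by rw [pow_mul]
    have e3 : x = w ^ (j * p) := by
      calc x = u ^ p := hxu
        _ = (w ^ j) ^ p := by rw [huw]
        _ = w ^ (j * p) := by rw [pow_mul]
    have e4 : a = w ^ (j * q) := by
      calc a = u ^ q := hau
        _ = (w ^ j) ^ q := by rw [huw]
        _ = w ^ (j * q) := by rw [pow_mul]
    have hw1 : 1 < w := by
      rcases hw.lt_or_eq with h | h
      · exact h
      · exfalso; rw [← h] at e2; simp at e2; exact absurd e2 ha.ne'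
    have h1 : i * N x hx = j * p := hpowinj w hw1 _ _ (e1.symm.trans e3)
    have h2 : i * M x hx = j * q := hpowinj w hw1 _ _ (e2.symm.trans e4)
    have hiM : 0 < i * M x hx := by
      rcases Nat.eq_zero_or_pos (i * M x hx) with h | h
      · exfalso; rw [h] at e2; simp at e2; exact absurd e2 ha.ne'
      · exact h
    have hjq : 0 < j * q := h2 ▸ hiM
    have hi : 0 < i := Nat.pos_of_ne_zero (by rintro rfl; simp at hiM)
    have hM : 0 < M x hx := Nat.pos_of_ne_zero (by rintro h; rw [h] at hiM; simp at hiM)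
    have hj : 0 < j := Nat.pos_of_ne_zero (by rintro rfl; simp at hjq)
    have hq : 0 < q := Nat.pos_of_ne_zero (by rintro rfl; simp at hjq)
    have h3 : N x hx * q = p * M x hx := by
      have hij : 0 < i * j := Nat.mul_pos hi hj
      have hkey : (N x hx * q) * (i * j) = (p * M x hx) * (i * j) := by
        calc (N x hx * q) * (i * j) = (i * N x hx) * (j * q) := by ring
          _ = (j * p) * (i * M x hx) := by rw [h1, h2]
          _ = (p * M x hx) * (i * j) := by ring
      exact Nat.eq_of_mul_eq_mul_right hij hkey
    have : φ0 x = (N x hx : ℚ) / (M x hx) := by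
      rw [hφ0]; simp only [dif_pos hx]
    rw [this, div_eq_div_iff (by exact_mod_cast hM.ne') (by exact_mod_cast hq.ne')]
    exact_mod_cast h3
    -- basic properties of φ0
  have φ0_one : φ0 1 = 0 := by
    have := rep 1 le_rfl a 0 1 ha.le (by simp) (by simp)
    simpa using this
  have φ0_nonneg : ∀ (x : G) (hx : 1 ≤ x), 0 ≤ φ0 x := by
    intro x hx
    rw [hφ0]; simp only [dif_pos hx]; positivity
  have φ0_pos : ∀ x : G, 1 < x → 0 < φ0 x := by
    intro x hx
    have hx' : 1 ≤ x := hx.le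
    have hN : 0 < N x hx' := Nat.pos_of_ne_zero (by
      rintro h
      have := hxZ x hx'
      rw [h, pow_zero] at this
      exact absurd this.symm hx.ne)
    have hM : 0 < M x hx' := Nat.pos_of_ne_zero (by
      rintro h
      have := haZ x hx'
      rw [h, pow_zero] at this
      exact absurd this.symm ha.ne)
    have : φ0 x = (N x hx' : ℚ) / (M x hx') := by rw [hφ0]; simp only [dif_pos hx']
    rw [this]
    exact div_pos (by exact_mod_cast hN) (by exact_mod_cast hM)
  -- additivity on positives
  have addpos : ∀ x y : G, 1 ≤ x → 1 ≤ y → φ0 (x * y) = φ0 x + φ0 y := by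
    intro x y hx hy
    obtain ⟨zc, hzc, n1, m1, hx1, hy1⟩ := hcp x y hx hy
    obtain ⟨u, hu, i, j, hzu, hau⟩ := hcp zc a hzc ha.le
    have ex : x = u ^ (i * n1) := by
      calc x = zc ^ n1 := hx1
        _ = (u ^ i) ^ n1 := by rw [hzu]
        _ = u ^ (i * n1) := by rw [pow_mul]
    have ey : y = u ^ (i * m1) := by
      calc y = zc ^ m1 := hy1
        _ = (u ^ i) ^ m1 := by rw [hzu]
        _ = u ^ (i * m1) := by rw [pow_mul]
    have exy : x * y = u ^ (i * n1 + i * m1) := by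
      rw [ex, ey, pow_add]
    have hxy : 1 ≤ x * y := one_le_mul hx hy
    rw [rep (x * y) hxy u (i * n1 + i * m1) j hu exy hau,
      rep x hx u (i * n1) j hu ex hau, rep y hy u (i * m1) j hu ey hau]
    push_cast
    ring
  -- commutativity
  have commpos : ∀ x y : G, 1 ≤ x → 1 ≤ y → Commute x y := by
    intro x y hx hy
    obtain ⟨zc, _, n1, m1, hx1, hy1⟩ := hcp x y hx hy
    rw [hx1, hy1]
    exact Commute.pow_pow_self zc n1 m1
  have comm : ∀ x y : G, Commute x y := by
    intro x y
    rcases le_total 1 x with hx | hx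
    · rcases le_total 1 y with hy | hy
      · exact commpos x y hx hy
      · have := (commpos x y⁻¹ hx (one_le_inv'.mpr hy)).inv_right
        simpa using this
    · rcases le_total 1 y with hy | hy
      · have := (commpos x⁻¹ y (one_le_inv'.mpr hx) hy).inv_left
        simpa using this
      · have := ((commpos x⁻¹ y⁻¹ (one_le_inv'.mpr hx) (one_le_inv'.mpr hy)).inv_left).inv_right
        simpa using this
  -- the map
  set φ : G → ℚ := fun x => if 1 ≤ x then φ0 x else -φ0 x⁻¹ with hφ
  have φpos : ∀ x : G, 1 ≤ x → φ x = φ0 x := by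
    intro x hx; rw [hφ]; simp only [if_pos hx]
  have φneg : ∀ x : G, ¬ 1 ≤ x → φ x = -φ0 x⁻¹ := by
    intro x hx; rw [hφ]; simp only [if_neg hx]
  -- homomorphism
  have hom2 : ∀ x y : G, 1 ≤ x → ¬ 1 ≤ y → φ (x * y) = φ x + φ y := by
    intro x y hx hy
    have hy1 : y ≤ 1 := le_of_not_ge hy
    have hyi : 1 ≤ y⁻¹ := one_le_inv'.mpr hy1
    rcases le_or_gt 1 (x * y) with hxy | hxy
    · rw [φpos _ hxy, φpos _ hx, φneg _ hy]
      have h5 : φ0 x = φ0 (x * y) + φ0 y⁻¹ := by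
        have h6 := addpos (x * y) y⁻¹ hxy hyi
        rw [mul_inv_cancel_right] at h6
        exact h6
      linarith
    · have hxy' : ¬ 1 ≤ x * y := not_le.mpr hxy
      rw [φneg _ hxy', φpos _ hx, φneg _ hy, mul_inv_rev]
      have h1 : 1 ≤ y⁻¹ * x⁻¹ := by
        rw [← mul_inv_rev]
        exact one_le_inv'.mpr hxy.le
      have h5 : φ0 y⁻¹ = φ0 (y⁻¹ * x⁻¹) + φ0 x := by
        have h6 := addpos (y⁻¹ * x⁻¹) x h1 hx
        rw [inv_mul_cancel_right] at h6
        exact h6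
      linarith
  have hom : ∀ x y : G, φ (x * y) = φ x + φ y := by
    intro x y
    rcases le_or_gt 1 x with hx | hx
    · rcases le_or_gt 1 y with hy | hy
      · have hxy : 1 ≤ x * y := one_le_mul hx hy
        rw [φpos _ hxy, φpos _ hx, φpos _ hy, addpos x y hx hy]
      · exact hom2 x y hx (not_le.mpr hy)
    · rcases le_or_gt 1 y with hy | hy
      · rw [(comm x y).eq, hom2 y x hy (not_le.mpr hx)]
        ring
      · have hxy : x * y < 1 := by
          calc x * y < x * 1 := mul_lt_mul_right hy x
            _ = x := mul_one x
            _ < 1 := hx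
        rw [φneg _ (not_le.mpr hxy), φneg _ (not_le.mpr hx), φneg _ (not_le.mpr hy), mul_inv_rev,
          addpos y⁻¹ x⁻¹ (one_le_inv'.mpr hy.le) (one_le_inv'.mpr hx.le)]
        ring
  -- injectivity
  have φ1 : φ 1 = 0 := by rw [φpos 1 le_rfl, φ0_one]
  have hzero : ∀ z : G, φ z = 0 → z = 1 := by
    intro zz h
    rcases lt_trichotomy zz 1 with hlt | he | hgt
    · exfalso
      have h1 : φ zz = -φ0 zz⁻¹ := φneg _ (not_le.mpr hlt)
      have hp := φ0_pos zz⁻¹ (one_lt_inv'.mpr hlt)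
      rw [h] at h1
      linarith
    · exact he
    · exfalso
      have h1 : φ zz = φ0 zz := φpos _ hgt.le
      have hp := φ0_pos zz hgt
      rw [h] at h1
      linarith
  have hinj : Function.Injective φ := by
    intro x y h
    have hyinv : φ y⁻¹ = -φ y := by
      have h6 := hom y y⁻¹
      rw [mul_inv_cancel, φ1] at h6
      linarith
    have h2 : φ (x * y⁻¹) = 0 := by
      rw [hom x y⁻¹, hyinv, h]; ring
    have := hzero _ h2
    exact mul_inv_eq_one.mp this
  -- monotone
  have hmono : ∀ x y : G, x ≤ y → φ x ≤ φ y := by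
    intro x y hxy
    have h1 : 1 ≤ x⁻¹ * y := by
      have := mul_le_mul_right hxy x⁻¹
      simpa using this
    have h2 := hom x (x⁻¹ * y)
    rw [mul_inv_cancel_left] at h2
    rw [h2, φpos _ h1]
    have := φ0_nonneg _ h1
    linarith
  exact ⟨φ, hom, hinj, hmono⟩
end

section
/- Every linearly ordered group G satisfying the common-power axiom is archimedean: for all x, y ∈ G with 1 < y there exists a natural number n such that x ≤ y^n. -/
/-- Every linearly ordered group satisfying the common-power axiom is
archimedean. -/
theorem stmt3 {G : Type*} [Group G] [LinearOrder G]
    (mono : ∀ a b c d : G, a ≤ b → c * a * d ≤ c * b * d)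
    (hcp : ∀ x y : G, 1 ≤ x → 1 ≤ y →
      ∃ z : G, 1 ≤ z ∧ ∃ n m : ℕ, x = z ^ n ∧ y = z ^ m) :
    ∀ x y : G, 1 < y → ∃ n : ℕ, x ≤ y ^ n := by
  intro x y hy
  rcases le_or_gt x 1 with hx | hx
  · exact ⟨0, by simpa using hx⟩
  · obtain ⟨z, hz, n, m, hxz, hyz⟩ := hcp x y hx.le hy.le
    have step : ∀ k : ℕ, z ^ k ≤ z ^ (k + 1) := by
      intro k
      have := mono 1 z (z ^ k) 1 hz
      simpa [pow_succ] using this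
    have key : ∀ k l : ℕ, k ≤ l → z ^ k ≤ z ^ l := by
      intro k l hkl
      induction l, hkl using Nat.le_induction with
      | base => exact le_refl _
      | succ l hl ih => exact ih.trans (step l)
    have hm : 0 < m := by
      rcases Nat.eq_zero_or_pos m with h | h
      · subst h; simp at hyz; exact absurd hyz.symm hy.ne
      · exact h
    refine ⟨n, ?_⟩
    have : x ≤ z ^ (m * n) := hxz ▸ key n (m * n) (Nat.le_mul_of_pos_left n hm)
    calc x ≤ z ^ (m * n) := this
    _ = (z ^ m) ^ n := by rw [pow_mul]
    _ = y ^ n := by rw [hyz]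
end

section
/- Let G be a partially oriented groupoid with non-triviality predicate and let n ≥ 1. Then the map sending a homomorphism F : X_n → G of such structures to the tuple (F(ξ_0), …, F(ξ_{n−1})) — where ξ_i denotes the arrow of X_n from i to i+1 given by the integer 1 — is a bijection from the set of homomorphisms X_n → G onto the set of positive non-trivial n-loops in G (the loop having objects o_i = F(i) and arrows x_i = F(ξ_i)). -/
open CategoryTheory

/-- The groupoid `X_n`: objects are elements of `ℤ/nℤ`, arrows `i ⟶ j` are integers
`m` with `m ≡ j - i (mod n)`, composition is addition of integers, identities are `0`
and inverses are negation. -/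
instance XnGroupoid (n : ℕ) : Groupoid (ZMod n) where
  Hom i j := {m : ℤ // (m : ZMod n) = j - i}
  id i := ⟨0, by simp⟩
  comp {i j k} f g := ⟨f.1 + g.1, by push_cast [f.2, g.2]; ring⟩
  id_comp f := Subtype.ext (by simp)
  comp_id f := Subtype.ext (by simp)
  assoc f g h := Subtype.ext (by simp [add_assoc])
  inv {i j} f := ⟨-f.1, by push_cast [f.2]; ring⟩
  inv_comp f := Subtype.ext (by simp)
  comp_inv f := Subtype.ext (by simp)

/-- The generating arrow `ξ_i : i ⟶ i + 1` of `X_n`, given by the integer `1`. -/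
def xi (n : ℕ) (i : ZMod n) : i ⟶ (i + 1) := ⟨1, by push_cast; ring⟩

/-- A partially oriented groupoid with non-triviality predicate: a positivity
predicate `P` on arrows containing all identities, closed under composition and such
that `P f` and `P f⁻¹` force `f` to be an identity; together with a predicate `T` on
arrows holding only for endomorphisms, never for identities, stable under nonzero
integer powers and under rotation of composites. -/
structure OrientedTStruct (G : Type*) [Groupoid G] where
  P : ∀ {a b : G}, (a ⟶ b) → Prop
  T : ∀ {a b : G}, (a ⟶ b) → Prop
  P_id : ∀ a : G, P (𝟙 a)
  P_comp : ∀ {a b c : G} (f : a ⟶ b) (g : b ⟶ c), P f → P g → P (f ≫ g)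
  P_antisym : ∀ {a b : G} (f : a ⟶ b), P f → P (Groupoid.inv f) →
    ∃ h : a = b, f = eqToHom h
  T_endo : ∀ {a b : G} (f : a ⟶ b), T f → a = b
  T_not_id : ∀ a : G, ¬ T (𝟙 a)
  T_pow : ∀ {a : G} (f : CategoryTheory.End a) (k : ℤ), k ≠ 0 → T f → T (f ^ k)
  T_rot : ∀ {a b : G} (f : a ⟶ b) (g : b ⟶ a), T (f ≫ g) → T (g ≫ f)

/-- The value of an integer power of an endomorphism of `X_n`. -/
lemma Xn_pow_val (n : ℕ) (i : ZMod n) (f : CategoryTheory.End i) (k : ℤ) :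
    ((f ^ k : CategoryTheory.End i)).1 = k * f.1 := by
  have hnat : ∀ m : ℕ, ((f ^ m : CategoryTheory.End i)).1 = (m : ℤ) * f.1 := by
    intro m
    induction m with
    | zero =>
        rw [pow_zero]
        show (0 : ℤ) = ((0 : ℕ) : ℤ) * f.1
        simp
    | succ m ih =>
        rw [pow_succ]
        show f.1 + ((f ^ m : CategoryTheory.End i)).1 = ((m + 1 : ℕ) : ℤ) * f.1
        rw [ih]; push_cast; ring
  rcases k with p | p
  · rw [Int.ofNat_eq_coe, zpow_natCast]
    exact hnat p
  · rw [zpow_negSucc]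
    show -((f ^ (p + 1) : CategoryTheory.End i)).1 = Int.negSucc p * f.1
    rw [hnat]
    rw [Int.negSucc_eq]
    push_cast; ring

/-- The canonical partially oriented groupoid structure with non-triviality predicate
on `X_n`: an arrow `m` is positive iff `m ≥ 0`, and an arrow `m : i ⟶ j` is
non-trivial iff `i = j` and `m ≠ 0`. -/
def XnTStruct (n : ℕ) : OrientedTStruct (ZMod n) where
  P f := 0 ≤ f.1
  T {i j} f := i = j ∧ f.1 ≠ 0
  P_id a := le_refl 0
  P_comp f g hf hg := add_nonneg hf hg
  P_antisym := by
    intro i j f hf hinv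
    have hneg : (0 : ℤ) ≤ -f.1 := hinv
    have hm : f.1 = 0 := le_antisymm (by linarith) hf
    have hij : i = j := by
      have h2 := f.2
      rw [hm] at h2
      push_cast at h2
      exact (eq_of_sub_eq_zero h2.symm).symm
    subst hij
    refine ⟨rfl, Subtype.ext ?_⟩
    show f.1 = (0 : ℤ)
    exact hm
  T_endo f h := h.1
  T_not_id a := by
    rintro ⟨-, h⟩
    exact h rfl
  T_pow := by
    rintro a f k hk ⟨-, hf⟩
    refine ⟨rfl, ?_⟩
    rw [Xn_pow_val]
    exact mul_ne_zero hk hf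
  T_rot := by
    rintro a b f g ⟨-, h⟩
    refine ⟨rfl, ?_⟩
    have h' : f.1 + g.1 ≠ 0 := h
    show g.1 + f.1 ≠ 0
    omega

/-- A homomorphism of partially oriented groupoids with non-triviality predicate:
a functor preserving both `P` and `T`. -/
structure OrientedTHom {G H : Type*} [Groupoid G] [Groupoid H]
    (S : OrientedTStruct G) (S' : OrientedTStruct H) where
  F : G ⥤ H
  mapP : ∀ {a b : G} (f : a ⟶ b), S.P f → S'.P (F.map f)
  mapT : ∀ {a b : G} (f : a ⟶ b), S.T f → S'.T (F.map f)

/-- A "raw loop" of length `n` in a groupoid `G`: objects indexed by `ℤ/nℤ` and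
arrows `x i : o i ⟶ o (i+1)`. -/
structure Loop (G : Type*) [Groupoid G] (n : ℕ) where
  o : ZMod n → G
  x : ∀ i : ZMod n, o i ⟶ o (i + 1)

namespace Loop

variable {G : Type*} [Groupoid G] {n : ℕ}

/-- The composite of `d` consecutive arrows of the loop, starting at index `s`. -/
def seg (L : Loop G n) (s : ℕ) : ∀ d : ℕ, (L.o (s : ZMod n) ⟶ L.o ((s + d : ℕ) : ZMod n))
  | 0 => eqToHom (congrArg L.o (by push_cast; ring))
  | d + 1 => seg L s d ≫ L.x ((s + d : ℕ) : ZMod n) ≫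
      eqToHom (congrArg L.o (by push_cast; ring))

/-- The total composite `x_{n-1} ∘ ⋯ ∘ x_1 ∘ x_0 : o 0 ⟶ o 0` of a loop. -/
def total (L : Loop G n) : L.o 0 ⟶ L.o 0 :=
  eqToHom (congrArg L.o (by push_cast; ring)) ≫ L.seg 0 n ≫
    eqToHom (congrArg L.o (by simp [ZMod.natCast_self]))

end Loop

/-- A loop is a positive non-trivial `n`-loop when all its arrows are positive and
its total composite satisfies the non-triviality predicate `T`. -/
def IsPosLoop {G : Type*} [Groupoid G] (S : OrientedTStruct G) {n : ℕ}
    (L : Loop G n) : Prop :=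
  (∀ i, S.P (L.x i)) ∧ S.T L.total
/-! ### Auxiliary development -/

section Aux

variable {G : Type*} [Groupoid G] {n : ℕ}

lemma OrientedTStruct.P_eqToHom (S : OrientedTStruct G) {a b : G} (h : a = b) :
    S.P (eqToHom h) := by subst h; exact S.P_id a

lemma OrientedTStruct.T_conj (S : OrientedTStruct G) {a b : G} (f : a ⟶ b)
    (g : CategoryTheory.End a) (hT : S.T g) : S.T (Groupoid.inv f ≫ g ≫ f) := by
  apply S.T_rot (g ≫ f) (Groupoid.inv f)
  simpa using hT

namespace Loop

/-- Transport of the arrows of a loop along an equality of indices. -/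
lemma x_congr (L : Loop G n) {i i' : ZMod n} (h : i = i') :
    L.x i' = eqToHom (congrArg L.o h.symm) ≫ L.x i ≫
      eqToHom (congrArg L.o (by rw [h])) := by
  subst h; simp

/-- The composite of `k` consecutive arrows of the loop starting at `i : ZMod n`. -/
def path (L : Loop G n) (i : ZMod n) : ∀ k : ℕ, L.o i ⟶ L.o (i + (k : ℕ))
  | 0 => eqToHom (congrArg L.o (by push_cast; ring))
  | k+1 => L.path i k ≫ L.x (i + (k : ℕ)) ≫ eqToHom (congrArg L.o (by push_cast; ring))

lemma path_congr (L : Loop G n) {i i' : ZMod n} (h : i = i') (k : ℕ) :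
    L.path i' k = eqToHom (congrArg L.o h.symm) ≫ L.path i k ≫
      eqToHom (congrArg L.o (by rw [h])) := by
  subst h; simp

lemma path_add (L : Loop G n) (i : ZMod n) (a b : ℕ) :
    L.path i (a + b) = L.path i a ≫ L.path (i + (a : ℕ)) b ≫
      eqToHom (congrArg L.o (by push_cast; ring)) := by
  induction b with
  | zero => simp [path]
  | succ b ih =>
      show L.path i ((a + b) + 1) = _
      rw [path, ih, path]
      rw [L.x_congr (show i + ((a : ℕ) : ZMod n) + ((b : ℕ) : ZMod n) =
        i + (((a + b : ℕ) : ℕ) : ZMod n) by push_cast; ring)]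
      simp

lemma P_path (S : OrientedTStruct G) (L : Loop G n) (hP : ∀ i, S.P (L.x i))
    (i : ZMod n) (k : ℕ) : S.P (L.path i k) := by
  induction k with
  | zero => exact S.P_eqToHom _
  | succ k ih =>
      exact S.P_comp _ _ ih (S.P_comp _ _ (hP _) (S.P_eqToHom _))

lemma seg_eq_path (L : Loop G n) (s : ℕ) (k : ℕ) :
    L.seg s k = L.path ((s : ZMod n)) k ≫
      eqToHom (congrArg L.o (by push_cast; ring)) := by
  induction k with
  | zero => simp [seg, path]
  | succ k ih =>
      rw [seg, ih, path]
      rw [L.x_congr (show (s : ZMod n) + ((k : ℕ) : ZMod n) = (((s + k : ℕ)) : ZMod n)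
        by push_cast; ring)]
      simp only [Category.assoc, eqToHom_trans, eqToHom_trans_assoc, eqToHom_refl,
        Category.id_comp, Category.comp_id]

/-- The arrow `o 0 ⟶ o i` given by composing the first `val i` arrows. -/
def tArrow (L : Loop G n) [NeZero n] (i : ZMod n) : L.o 0 ⟶ L.o i :=
  L.path 0 i.val ≫ eqToHom (congrArg L.o
    (by rw [ZMod.natCast_rightInverse i, zero_add]))

/-- The total loop as an endomorphism of `o 0`, via `path`. -/
def cLoop (L : Loop G n) : CategoryTheory.End (L.o 0) :=
  L.path 0 n ≫ eqToHom (congrArg L.o (by simp))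

lemma path_natCongr (L : Loop G n) (i : ZMod n) {k k' : ℕ} (h : k = k') :
    L.path i k = L.path i k' ≫ eqToHom (congrArg L.o (by rw [h])) := by
  subst h; simp

lemma path_zero_tower (L : Loop G n) (q r : ℕ) :
    L.path 0 (q * n + r) = (L.cLoop ^ q : CategoryTheory.End (L.o 0)) ≫ L.path 0 r ≫
      eqToHom (congrArg L.o (by push_cast; simp [ZMod.natCast_self])) := by
  induction q with
  | zero =>
      rw [L.path_natCongr (0 : ZMod n) (show 0 * n + r = r by ring)]
      show _ ≫ _ = (𝟙 (L.o 0)) ≫ _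
      simp
  | succ q ih =>
      rw [L.path_natCongr (0 : ZMod n) (show (q + 1) * n + r = n + (q * n + r) by ring),
        path_add,
        L.path_congr (show (0 : ZMod n) = 0 + ((n : ℕ) : ZMod n) by simp) (q * n + r), ih]
      rw [show (L.cLoop ^ (q + 1) : CategoryTheory.End (L.o 0)) = L.cLoop ≫ L.cLoop ^ q from
        pow_succ L.cLoop q]
      simp only [cLoop, Category.assoc, eqToHom_trans, eqToHom_trans_assoc, eqToHom_refl,
        Category.id_comp, Category.comp_id]

end Loop

/-- The exponent associated to an arrow of `X_n`. -/
def qv {n : ℕ} {i j : ZMod n} (f : i ⟶ j) : ℤ :=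
  (f.1 - ((j.val : ℤ) - (i.val : ℤ))) / n

lemma qv_spec {n : ℕ} [NeZero n] {i j : ZMod n} (f : i ⟶ j) :
    (n : ℤ) * qv f = f.1 - ((j.val : ℤ) - (i.val : ℤ)) := by
  have hc : ((f.1 - ((j.val : ℤ) - (i.val : ℤ)) : ℤ) : ZMod n) = 0 := by
    push_cast [f.2, ZMod.natCast_rightInverse i, ZMod.natCast_rightInverse j]
    ring
  obtain ⟨u, hu⟩ := (ZMod.intCast_zmod_eq_zero_iff_dvd _ n).1 hc
  rw [qv, hu, Int.mul_ediv_cancel_left _ (by exact_mod_cast NeZero.ne n)]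

lemma qv_id {n : ℕ} [NeZero n] (i : ZMod n) : qv (𝟙 i) = 0 := by
  have h := qv_spec (𝟙 i)
  have h0 : ((𝟙 i : i ⟶ i)).1 = 0 := rfl
  rw [h0] at h
  have hn : (n : ℤ) ≠ 0 := by exact_mod_cast NeZero.ne n
  have : (n : ℤ) * qv (𝟙 i) = 0 := by rw [h]; ring
  exact (mul_eq_zero.1 this).resolve_left hn

lemma qv_comp {n : ℕ} [NeZero n] {i j k : ZMod n} (f : i ⟶ j) (g : j ⟶ k) :
    qv (f ≫ g) = qv f + qv g := by
  have hn : (n : ℤ) ≠ 0 := by exact_mod_cast NeZero.ne n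
  have h1 := qv_spec f
  have h2 := qv_spec g
  have h3 := qv_spec (f ≫ g)
  have hc : ((f ≫ g)).1 = f.1 + g.1 := rfl
  rw [hc] at h3
  have : (n : ℤ) * qv (f ≫ g) = (n : ℤ) * (qv f + qv g) := by
    rw [h3]; rw [mul_add, h1, h2]; ring
  exact mul_left_cancel₀ hn this

namespace Loop

lemma cLoop_eq_total (L : Loop G n) : L.cLoop = L.total := by
  rw [total, seg_eq_path,
    L.path_congr (show (0 : ZMod n) = ((0 : ℕ) : ZMod n) by simp) n]
  simp [cLoop]

lemma map_formula_nonneg (L : Loop G n) [NeZero n] {i j : ZMod n} (f : i ⟶ j)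
    (k : ℕ) (hfk : f.1 = (k : ℤ)) :
    Groupoid.inv (L.tArrow i) ≫ ((L.cLoop ^ qv f : CategoryTheory.End (L.o 0))) ≫ L.tArrow j
      = L.path i k ≫ eqToHom (congrArg L.o (by
          have h2 := f.2
          rw [hfk] at h2
          push_cast at h2
          rw [h2]; ring)) := by
  have hn0 : (n : ℤ) ≠ 0 := by exact_mod_cast NeZero.ne n
  have hi : ((i.val : ℕ) : ZMod n) = i := ZMod.natCast_rightInverse i
  have hj' : j = ((i.val + k : ℕ) : ZMod n) := by
    have h2 := f.2
    rw [hfk] at h2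
    push_cast at h2 ⊢
    rw [hi, h2]
    ring
  have hval : i.val + k = (i.val + k) / n * n + j.val := by
    have hjv : j.val = (i.val + k) % n := by rw [hj']; exact ZMod.val_natCast _ _
    rw [hjv]
    exact (Nat.div_add_mod' _ _).symm
  have hq : qv f = (((i.val + k) / n : ℕ) : ℤ) := by
    have h1 := qv_spec f
    rw [hfk] at h1
    apply mul_left_cancel₀ hn0
    rw [h1]
    have h2 : ((i.val + k : ℕ) : ℤ) = (((i.val + k) / n : ℕ) : ℤ) * (n : ℤ) + (j.val : ℤ) := by
      exact_mod_cast congrArg (Nat.cast : ℕ → ℤ) hval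
    push_cast at h2 ⊢
    linarith
  rw [Groupoid.inv_eq_inv, IsIso.inv_comp_eq, hq, zpow_natCast]
  have h0i : (0 : ZMod n) + ((i.val : ℕ) : ZMod n) = i := by rw [hi, zero_add]
  have hstep : L.path ((0 : ZMod n) + ((i.val : ℕ) : ZMod n)) k
      = eqToHom (congrArg L.o h0i) ≫ L.path i k ≫
        eqToHom (congrArg L.o (by rw [h0i])) := L.path_congr h0i.symm k
  calc (L.cLoop ^ ((i.val + k) / n) : CategoryTheory.End (L.o 0)) ≫ L.tArrow j
      = L.path 0 ((i.val + k) / n * n + j.val) ≫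
          eqToHom (congrArg L.o (by rw [← hval, hj', zero_add])) := by
        rw [path_zero_tower]
        simp only [tArrow, Category.assoc, eqToHom_trans]
    _ = L.tArrow i ≫ L.path i k ≫ eqToHom (congrArg L.o (by rw [hj']; push_cast [hi]; ring)) := by
        rw [L.path_natCongr (0 : ZMod n) hval.symm, path_add, hstep]
        simp only [tArrow, Category.assoc, eqToHom_trans, eqToHom_trans_assoc]

end Loop

section Build

variable (S : OrientedTStruct G)

/-- The functor `X_n ⥤ G` built from a loop. -/
def buildFunctor (L : Loop G n) [NeZero n] : ZMod n ⥤ G where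
  obj i := L.o i
  map {i j} f := Groupoid.inv (L.tArrow i) ≫
    ((L.cLoop ^ qv f : CategoryTheory.End (L.o 0))) ≫ L.tArrow j
  map_id i := by
    show Groupoid.inv (L.tArrow i) ≫
      ((L.cLoop ^ qv (𝟙 i) : CategoryTheory.End (L.o 0))) ≫ L.tArrow i = 𝟙 (L.o i)
    rw [qv_id, zpow_zero]
    show Groupoid.inv (L.tArrow i) ≫ (𝟙 (L.o 0)) ≫ L.tArrow i = _
    rw [Category.id_comp, Groupoid.inv_comp]
  map_comp {i j k} f g := by
    show Groupoid.inv (L.tArrow i) ≫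
      ((L.cLoop ^ qv (f ≫ g) : CategoryTheory.End (L.o 0))) ≫ L.tArrow k = _
    rw [qv_comp, add_comm (qv f) (qv g), zpow_add]
    show Groupoid.inv (L.tArrow i) ≫
      ((L.cLoop ^ qv f : CategoryTheory.End (L.o 0)) ≫ (L.cLoop ^ qv g)) ≫ L.tArrow k = _
    simp only [Groupoid.inv_eq_inv]
    simp

lemma build_map_xi (L : Loop G n) [NeZero n] (i : ZMod n) :
    (buildFunctor L).map (xi n i) = L.x i := by
  have h : (buildFunctor L).map (xi n i) = L.path i 1 ≫ eqToHom _ :=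
    L.map_formula_nonneg (xi n i) 1 rfl
  rw [h, Loop.path, Loop.path]
  rw [L.x_congr (show i = i + (((0 : ℕ) : ℕ) : ZMod n) by push_cast; ring)]
  simp only [Category.assoc, eqToHom_trans, eqToHom_trans_assoc, eqToHom_refl,
    Category.id_comp, Category.comp_id]
  erw [eqToHom_trans, eqToHom_refl, Category.comp_id]

/-- The homomorphism built from a positive non-trivial loop. -/
def build (L : Loop G n) [NeZero n] (hP : ∀ i, S.P (L.x i)) (hT : S.T L.total) :
    OrientedTHom (XnTStruct n) S where
  F := buildFunctor L
  mapP {i j} f hf := by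
    have hf' : (0 : ℤ) ≤ f.1 := hf
    show S.P (Groupoid.inv (L.tArrow i) ≫
      ((L.cLoop ^ qv f : CategoryTheory.End (L.o 0))) ≫ L.tArrow j)
    rw [L.map_formula_nonneg f f.1.toNat (Int.toNat_of_nonneg hf').symm]
    exact S.P_comp _ _ (Loop.P_path S L hP i _) (S.P_eqToHom _)
  mapT {i j} f hf := by
    obtain ⟨hij, hf0⟩ := hf
    subst hij
    have hn0 : (n : ℤ) ≠ 0 := by exact_mod_cast NeZero.ne n
    have hq0 : qv f ≠ 0 := by
      intro h0
      have := qv_spec f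
      rw [h0, mul_zero] at this
      omega
    have hTc : S.T L.cLoop := by rw [Loop.cLoop_eq_total]; exact hT
    show S.T (Groupoid.inv (L.tArrow i) ≫
      ((L.cLoop ^ qv f : CategoryTheory.End (L.o 0))) ≫ L.tArrow i)
    exact S.T_conj _ _ (S.T_pow L.cLoop (qv f) hq0 hTc)

lemma build_congr {L L' : Loop G n} [NeZero n] (h : L = L') (hP hT hP' hT') :
    build S L hP hT = build S L' hP' hT' := by subst h; rfl

/-- The loop associated to a homomorphism `X_n → G`. -/
def loopOf (F : OrientedTHom (XnTStruct n) S) : Loop G n :=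
  { o := fun i => F.F.obj i, x := fun i => F.F.map (xi n i) }

/-- Powers of the generator in `X_n`. -/
def chi (n : ℕ) (i : ZMod n) (k : ℕ) : i ⟶ (i + (k : ℕ) : ZMod n) :=
  ⟨(k : ℤ), by push_cast; ring⟩

lemma Xn_eqToHom_val {n : ℕ} {i j : ZMod n} (h : i = j) : (eqToHom h).1 = 0 := by
  subst h; rfl

lemma Xn_comp_val {n : ℕ} {i j k : ZMod n} (f : i ⟶ j) (g : j ⟶ k) :
    (f ≫ g).1 = f.1 + g.1 := rfl

lemma chi_succ (n : ℕ) (i : ZMod n) (k : ℕ) :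
    chi n i (k + 1) = chi n i k ≫ xi n (i + (k : ℕ)) ≫
      eqToHom (show (i + ((k : ℕ) : ZMod n)) + 1 = i + (((k + 1 : ℕ) : ℕ) : ZMod n)
        by push_cast; ring) := by
  apply Subtype.ext
  rw [Xn_comp_val, Xn_comp_val, Xn_eqToHom_val]
  show ((k + 1 : ℕ) : ℤ) = (k : ℤ) + ((1 : ℤ) + 0)
  push_cast; ring

lemma eqToHom_obj {C D : Type*} [Category C] [Category D] (F : C ⥤ D) {a b : C}
    (h : a = b) (p : F.obj a = F.obj b) : eqToHom p = F.map (eqToHom h) := by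
  subst h; simp

lemma map_chi (F : OrientedTHom (XnTStruct n) S) (i : ZMod n) (k : ℕ) :
    F.F.map (chi n i k) = (loopOf S F).path i k := by
  induction k with
  | zero =>
      have h0 : i = i + (((0 : ℕ) : ℕ) : ZMod n) := by push_cast; ring
      have hc : chi n i 0 = eqToHom h0 := Subtype.ext (by rw [Xn_eqToHom_val]; rfl)
      rw [hc, eqToHom_map]
      rfl
  | succ k ih =>
      rw [chi_succ, F.F.map_comp, F.F.map_comp, ih, eqToHom_map]
      rfl

lemma hom_eq_chi {n : ℕ} {i j : ZMod n} (f : i ⟶ j) (k : ℕ) (hk : f.1 = (k : ℤ))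
    (h : i + ((k : ℕ) : ZMod n) = j) : f = chi n i k ≫ eqToHom h := by
  apply Subtype.ext
  rw [Xn_comp_val, Xn_eqToHom_val]
  show f.1 = (k : ℤ) + 0
  rw [hk]; ring

lemma recon_map_nonneg (F : OrientedTHom (XnTStruct n) S) [NeZero n] {i j : ZMod n}
    (f : i ⟶ j) (hf : 0 ≤ f.1) :
    (buildFunctor (loopOf S F)).map f = F.F.map f := by
  have hk : f.1 = (f.1.toNat : ℤ) := (Int.toNat_of_nonneg hf).symm
  have h : i + ((f.1.toNat : ℕ) : ZMod n) = j := by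
    have h2 := f.2
    rw [hk] at h2
    push_cast at h2
    rw [h2]; ring
  show Groupoid.inv ((loopOf S F).tArrow i) ≫ _ ≫ (loopOf S F).tArrow j = _
  rw [(loopOf S F).map_formula_nonneg f f.1.toNat hk, ← map_chi S F i f.1.toNat]
  conv_rhs => rw [hom_eq_chi f f.1.toNat hk h]
  rw [F.F.map_comp, eqToHom_map]
  rfl

lemma buildFunctor_eq (F : OrientedTHom (XnTStruct n) S) [NeZero n] :
    buildFunctor (loopOf S F) = F.F := by
  refine CategoryTheory.Functor.hext (fun i => rfl) (fun i j f => heq_of_eq ?_)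
  by_cases hf : 0 ≤ f.1
  · exact recon_map_nonneg S F f hf
  · have hg : (0 : ℤ) ≤ (Groupoid.inv f).1 := by
      show (0 : ℤ) ≤ -f.1
      omega
    have h2 := recon_map_nonneg S F (Groupoid.inv f) hg
    have hff : f = Groupoid.inv (Groupoid.inv f) := by simp
    rw [hff, Groupoid.inv_eq_inv (Groupoid.inv f), Functor.map_inv, Functor.map_inv]
    exact congrArg (fun g => inv g) h2

lemma OrientedTHom.ext' {G H : Type*} [Groupoid G] [Groupoid H]
    {S₁ : OrientedTStruct G} {S₂ : OrientedTStruct H}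
    {A B : OrientedTHom S₁ S₂} (h : A.F = B.F) : A = B := by
  cases A; cases B; cases h; rfl

lemma loopOf_P (F : OrientedTHom (XnTStruct n) S) (i : ZMod n) :
    S.P ((loopOf S F).x i) :=
  F.mapP (xi n i) (show (0 : ℤ) ≤ 1 by norm_num)

lemma loopOf_T (F : OrientedTHom (XnTStruct n) S) (hn : 1 ≤ n) :
    S.T (loopOf S F).total := by
  have h1 : (loopOf S F).total = F.F.map
      (eqToHom (show (0 : ZMod n) = ((0 : ℕ) : ZMod n) by simp) ≫ chi n ((0 : ℕ) : ZMod n) n ≫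
        eqToHom (show ((0 : ℕ) : ZMod n) + ((n : ℕ) : ZMod n) = (0 : ZMod n)
          by push_cast; simp)) := by
    rw [F.F.map_comp, F.F.map_comp, eqToHom_map, eqToHom_map]
    rw [Loop.total, Loop.seg_eq_path, map_chi S F ((0 : ℕ) : ZMod n) n]
    simp only [Category.assoc, eqToHom_trans]
    rfl
  rw [h1]
  refine F.mapT _ ⟨rfl, ?_⟩
  rw [Xn_comp_val, Xn_comp_val, Xn_eqToHom_val, Xn_eqToHom_val]
  show ¬((0 : ℤ) + ((n : ℤ) + 0) = 0)
  have : (1 : ℤ) ≤ (n : ℤ) := by exact_mod_cast hn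
  omega

end Build

end Aux


/-- For a partially oriented groupoid `G` with non-triviality predicate
and `n ≥ 1`, the map sending a homomorphism `F : X_n → G` to the loop
`(F ξ_0, …, F ξ_{n-1})` is a bijection from the set of homomorphisms `X_n → G` onto
the set of positive non-trivial `n`-loops in `G`. -/
theorem stmt7 {G : Type*} [Groupoid G] (S : OrientedTStruct G) (n : ℕ) (hn : 1 ≤ n) :
    Set.BijOn
      (fun F : OrientedTHom (XnTStruct n) S =>
        ({ o := fun i => F.F.obj i, x := fun i => F.F.map (xi n i) } : Loop G n))
      Set.univ
      {L : Loop G n | IsPosLoop S L} := by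
  haveI : NeZero n := ⟨by omega⟩
  refine ⟨?_, ?_, ?_⟩
  · intro F _
    show IsPosLoop S (loopOf S F)
    exact ⟨fun i => loopOf_P S F i, loopOf_T S F hn⟩
  · intro F _ F' _ h
    have r1 : build S (loopOf S F) (fun i => loopOf_P S F i) (loopOf_T S F hn) = F :=
      OrientedTHom.ext' (buildFunctor_eq S F)
    have r2 : build S (loopOf S F') (fun i => loopOf_P S F' i) (loopOf_T S F' hn) = F' :=
      OrientedTHom.ext' (buildFunctor_eq S F')
    rw [← r1, ← r2]
    exact build_congr S h _ _ _ _
  · intro L hL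
    obtain ⟨o, x⟩ := L
    refine ⟨build S ⟨o, x⟩ hL.1 hL.2, Set.mem_univ _, ?_⟩
    simp only [Loop.mk.injEq]
    exact ⟨rfl, heq_of_eq (funext fun i => build_map_xi (⟨o, x⟩ : Loop G n) i)⟩
end

section
/- In any model of the cyclic theory T_C, given an elementary cycle of length n with objects o_i and arrows x_i : o_i → o_{i+1} (i ∈ ℤ/nℤ), and given any object c, there exist an index i ∈ ℤ/nℤ and arrows α : o_i → c and β : c → o_{i+1} with P(α), P(β) and β ∘ α = x_i. -/
open CategoryTheory

/-- A model of the cyclic theory `T_C`: a groupoid with a totally-oriented positivity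
predicate `P`, distinguished cycles `C a : a ⟶ a` which are positive, non-identical
and stable under rotation, with positive arrows between any two objects, and such
that every positive arrow factors as a minimal positive arrow after a power of the
cycle at its domain. -/
structure CyclicModel (G : Type*) [Groupoid G] where
  P : ∀ {a b : G}, (a ⟶ b) → Prop
  C : ∀ a : G, a ⟶ a
  P_id : ∀ a : G, P (𝟙 a)
  P_comp : ∀ {a b c : G} (f : a ⟶ b) (g : b ⟶ c), P f → P g → P (f ≫ g)
  P_antisym : ∀ {a b : G} (f : a ⟶ b), P f → P (Groupoid.inv f) →
    ∃ h : a = b, f = eqToHom h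
  P_total : ∀ {a b : G} (f : a ⟶ b), P f ∨ P (Groupoid.inv f)
  P_C : ∀ a : G, P (C a)
  C_ne_id : ∀ a : G, C a ≠ 𝟙 a
  C_rot : ∀ {a b : G} (f : a ⟶ b) (g : b ⟶ a), f ≫ g = C a → g ≫ f = C b
  hom_nonempty : ∀ a b : G, ∃ f : a ⟶ b, P f
  factor : ∀ {a b : G} (f : a ⟶ b), P f →
    ∃ (k : ℕ) (α : a ⟶ b), (P α ∧ ∃ g : b ⟶ a, P g ∧ α ≫ g = C a) ∧
      f = ((C a ^ k : CategoryTheory.End a)) ≫ α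

/-- `α : a ⟶ b` is a minimal positive arrow: `α` is positive and some positive
`g : b ⟶ a` satisfies `g ∘ α = C a`. -/
def CyclicModel.PMin {G : Type*} [Groupoid G] (M : CyclicModel G) {a b : G}
    (α : a ⟶ b) : Prop :=
  M.P α ∧ ∃ g : b ⟶ a, M.P g ∧ α ≫ g = M.C a

/-- A loop is an elementary cycle when all its arrows are positive and its total
composite is the distinguished cycle at its base point. -/
def CyclicModel.IsCycle {G : Type*} [Groupoid G] (M : CyclicModel G) {n : ℕ}
    (L : Loop G n) : Prop :=
  (∀ i, M.P (L.x i)) ∧ L.total = M.C (L.o 0)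

section Aux
variable {G : Type*} [Groupoid G] {n : ℕ}

lemma stmt10_P_eqToHom (M : CyclicModel G) {a b : G} (h : a = b) : M.P (eqToHom h) := by
  subst h; simpa using M.P_id a

lemma stmt10_x_congr (L : Loop G n) {i i' : ZMod n} (h : i = i') :
    L.x i = eqToHom (congrArg L.o h) ≫ L.x i' ≫
      eqToHom (congrArg L.o (show i' + 1 = i + 1 by rw [h])) := by
  subst h; simp

lemma stmt10_step (Q R : ℕ → Prop) (htot : ∀ j, Q j ∨ R j) :
    ∀ n, Q 0 → R n → 1 ≤ n → ∃ j, j < n ∧ Q j ∧ R (j + 1) := by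
  intro n
  induction n with
  | zero => intro _ _ h; omega
  | succ m ih =>
    intro hQ0 hR _
    rcases Nat.eq_zero_or_pos m with rfl | hm
    · exact ⟨0, by omega, hQ0, hR⟩
    · rcases htot m with hQ | hR'
      · exact ⟨m, by omega, hQ, hR⟩
      · obtain ⟨j, hj, h1, h2⟩ := ih hQ0 hR' hm
        exact ⟨j, by omega, h1, h2⟩

end Aux


/-- In any model of the cyclic theory `T_C`, given an elementary cycle
of length `n` and any object `c`, some arrow `x_i` of the cycle factors as
`β ∘ α` with `α : o_i ⟶ c` and `β : c ⟶ o_{i+1}` both positive. -/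
theorem stmt10 {G : Type*} [Groupoid G] [Nonempty G] (M : CyclicModel G) {n : ℕ}
    (hn : 1 ≤ n) (L : Loop G n) (hL : M.IsCycle L) (c : G) :
    ∃ (i : ZMod n) (α : L.o i ⟶ c) (β : c ⟶ L.o (i + 1)),
      M.P α ∧ M.P β ∧ α ≫ β = L.x i := by
  classical
  obtain ⟨f, hf⟩ := M.hom_nonempty (L.o 0) c
  obtain ⟨k, α, ⟨hα, g, hg, hαg⟩, -⟩ := M.factor f hf
  set s : ∀ j : ℕ, (L.o 0 ⟶ L.o ((0 + j : ℕ) : ZMod n)) :=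
    fun j => eqToHom (congrArg L.o (by norm_num)) ≫ L.seg 0 j with hs
  set a : ∀ j : ℕ, (L.o ((0 + j : ℕ) : ZMod n) ⟶ c) :=
    fun j => Groupoid.inv (s j) ≫ α with ha
  have hsrec : ∀ j : ℕ, s (j + 1) = s j ≫ L.x ((0 + j : ℕ) : ZMod n) ≫
      eqToHom (congrArg L.o (by push_cast; ring)) := by
    intro j
    simp [hs, Loop.seg]
  have key : ∀ j : ℕ, a j ≫ Groupoid.inv (a (j + 1)) =
      L.x ((0 + j : ℕ) : ZMod n) ≫ eqToHom (congrArg L.o (by push_cast; ring)) := by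
    intro j
    rw [ha]
    simp only [Groupoid.inv_eq_inv, IsIso.inv_comp, IsIso.inv_inv, Category.assoc,
      IsIso.hom_inv_id_assoc, IsIso.inv_hom_id_assoc]
    rw [hsrec j]
    simp
  -- Q 0
  have hQ0 : M.P (a 0) := by
    have : a 0 = eqToHom (congrArg L.o (by norm_num)) ≫ α := by
      simp [ha, hs, Loop.seg, Groupoid.inv_eq_inv]
    rw [this]
    exact M.P_comp _ _ (stmt10_P_eqToHom M _) hα
  -- R n
  have hRn : M.P (Groupoid.inv (a n)) := by
    have hsn : s n = M.C (L.o 0) ≫ eqToHom (congrArg L.o (show ((0 + n : ℕ) : ZMod n) = (0 : ZMod n) by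
        push_cast; simp).symm) := by
      rw [← hL.2]
      simp [hs, Loop.total]
    have : Groupoid.inv (a n) = g ≫ eqToHom (congrArg L.o (show ((0 + n : ℕ) : ZMod n) = (0 : ZMod n) by
        push_cast; simp).symm) := by
      rw [ha]
      simp only [Groupoid.inv_eq_inv, IsIso.inv_comp, IsIso.inv_inv]
      rw [hsn, ← hαg]
      simp
    rw [this]
    exact M.P_comp _ _ hg (stmt10_P_eqToHom M _)
  obtain ⟨j, hjn, hQ, hR⟩ := stmt10_step (fun j => M.P (a j)) (fun j => M.P (Groupoid.inv (a j)))
    (fun j => M.P_total (a j)) n hQ0 hRn hn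
  have hij : ((0 + j : ℕ) : ZMod n) = ((j : ℕ) : ZMod n) := by norm_num
  refine ⟨((j : ℕ) : ZMod n), eqToHom (congrArg L.o hij).symm ≫ a j,
    Groupoid.inv (a (j + 1)) ≫ eqToHom (congrArg L.o (by push_cast; ring)), ?_, ?_, ?_⟩
  · exact M.P_comp _ _ (stmt10_P_eqToHom M _) hQ
  · exact M.P_comp _ _ hR (stmt10_P_eqToHom M _)
  · rw [Category.assoc, ← Category.assoc (a j), key j,
      stmt10_x_congr L hij.symm]
    simp
end
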